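/- Let M₁, ..., M_{2n-1} be matchings, each of size n, in a bipartite graph G. Then there exists a matching of size n consisting of edges e₁, ..., eₙ together with distinct indices i₁, ..., iₙ ∈ [2n-1] such that e_j ∈ M_{i_j} for each j (a full-size rainbow matching). -/

import Mathlib

open Finset
set_option linter.unusedSectionVars false
set_option linter.unusedVariables false
section Core
variable {ι V : Type*} [DecidableEq ι] [DecidableEq V]

def DInv (N : ι → Finset (V × V)) (U : Finset ι) (R : Finset (ι × V × V)) :
    List (ι × (V × V) × (ι × V × V)) → Prop
  | [] => True
  | x :: S => DInv N U R S ∧ x.1 ∈ U ∧ (∀ y ∈ S, y.1 ≠ x.1) ∧ x.2.1 ∈ N x.1 ∧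
      x.2.2 ∈ R ∧ (∀ y ∈ S, y.2.2 ≠ x.2.2) ∧ x.2.1.1 = x.2.2.2.1 ∧
      ((∀ p ∈ R, p.2.2 ≠ x.2.1.2) ∨ ∃ y ∈ S, y.2.2.2.2 = x.2.1.2)

lemma DInv.mem_facts {N : ι → Finset (V × V)} {U : Finset ι} {R : Finset (ι × V × V)} :
    ∀ {S}, DInv N U R S → ∀ x ∈ S, x.1 ∈ U ∧ x.2.1 ∈ N x.1 ∧ x.2.2 ∈ R ∧ x.2.1.1 = x.2.2.2.1
  | [], _, x, hx => absurd hx List.not_mem_nil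
  | a :: S, h, x, hx => by
      rcases List.mem_cons.1 hx with rfl | hx
      · exact ⟨h.2.1, h.2.2.2.1, h.2.2.2.2.1, h.2.2.2.2.2.2.1⟩
      · exact DInv.mem_facts h.1 x hx

lemma DInv.suffix {N : ι → Finset (V × V)} {U : Finset ι} {R : Finset (ι × V × V)} :
    ∀ (L₁ : List _) {L₂}, DInv N U R (L₁ ++ L₂) → DInv N U R L₂
  | [], _, h => h
  | a :: L₁, L₂, h => DInv.suffix L₁ h.1

lemma DInv.rlist_nodup {N : ι → Finset (V × V)} {U : Finset ι} {R : Finset (ι × V × V)} :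
    ∀ {S}, DInv N U R S → (S.map (fun y => y.2.2)).Nodup
  | [], _ => List.nodup_nil
  | a :: S, h => by
      simp only [List.map_cons, List.nodup_cons]
      refine ⟨?_, DInv.rlist_nodup h.1⟩
      simp only [List.mem_map]
      rintro ⟨y, hy, hye⟩
      exact h.2.2.2.2.2.1 y hy hye

lemma DInv.length_le {N : ι → Finset (V × V)} {U : Finset ι} {R : Finset (ι × V × V)}
    {S} (h : DInv N U R S) : S.length ≤ R.card := by
  have hnd := h.rlist_nodup
  have hsub : (S.map (fun y => y.2.2)).toFinset ⊆ R := by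
    intro r hr
    simp only [List.mem_toFinset, List.mem_map] at hr
    obtain ⟨y, hy, rfl⟩ := hr
    exact (h.mem_facts y hy).2.2.1
  have := Finset.card_le_card hsub
  rwa [List.toFinset_card_of_nodup hnd, List.length_map] at this

lemma drisko_extend
    (N : ι → Finset (V × V)) (U : Finset ι) (R : Finset (ι × V × V))
    (hRfst : Set.InjOn (fun p : ι × V × V => p.2.1) ↑R)
    (hRsnd : Set.InjOn (fun p : ι × V × V => p.2.2) ↑R) :
    ∀ (n : ℕ) (S : List (ι × (V × V) × (ι × V × V))), S.length ≤ n →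
      DInv N U R S → ∀ u e, u ∈ U → (∀ y ∈ S, y.1 ≠ u) → e ∈ N u →
      ((∀ p ∈ R, p.2.2 ≠ e.2) ∨ ∃ y ∈ S, y.2.2.2.2 = e.2) →
      (∀ y ∈ S, y.2.2.2.1 ≠ e.1) →
      ∃ (P Q : Finset (ι × V × V)) (β : V),
        Q ⊆ R ∧ (∀ q ∈ Q, ∃ y ∈ S, y.2.2 = q) ∧
        (∀ p ∈ P, p.1 ∈ U ∧ p.2 ∈ N p.1) ∧
        (∀ p ∈ P, p.1 = u ∨ ∃ y ∈ S, y.1 = p.1) ∧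
        (P.image fun p => p.1).card = P.card ∧
        (P.image fun p => p.2.1) = insert e.1 (Q.image fun p => p.2.1) ∧
        (P.image fun p => p.2.1).card = P.card ∧
        (P.image fun p => p.2.2) = insert β (Q.image fun p => p.2.2) ∧
        (∀ p ∈ R, p.2.2 ≠ β) ∧
        (P.image fun p => p.2.2).card = P.card ∧
        P.card = Q.card + 1 := by
  intro n
  induction n with
  | zero =>
      intro S hlen hinv u e hu hcolu he hchain hfste
      -- S = []
      rcases List.eq_nil_of_length_eq_zero (Nat.le_zero.1 hlen) with rfl
      rcases hchain with hfree | ⟨y, hy, _⟩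
      · exact ⟨{(u, e)}, ∅, e.2, by simp, by simp, by simp [hu, he], by simp, by simp,
          by simp, by simp, by simp, hfree, by simp, by simp⟩
      · exact absurd hy List.not_mem_nil
  | succ n ih =>
      intro S hlen hinv u e hu hcolu he hchain hfste
      rcases hchain with hfree | ⟨x, hxS, hxe⟩
      · exact ⟨{(u, e)}, ∅, e.2, by simp, by simp, by simp [hu, he], by simp, by simp,
          by simp, by simp, by simp, hfree, by simp, by simp⟩
      · -- recursive case
        obtain ⟨L₁, L₂, rfl⟩ := List.append_of_mem hxS
        have hsuf : DInv N U R (x :: L₂) := DInv.suffix L₁ hinv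
        obtain ⟨hinv₂, hxU, hxcols, hxe', hxR, hxrs, hxfsteq, hxchain⟩ := hsuf
        have hmemL₂ : ∀ z ∈ L₂, z ∈ L₁ ++ x :: L₂ := by
          intro z hz; simp [hz]
        have hlen₂ : L₂.length ≤ n := by
          have := hlen; simp [List.length_append] at this; omega
        -- fst-freshness for recursive call
        have hfste₂ : ∀ z ∈ L₂, z.2.2.2.1 ≠ x.2.1.1 := by
          intro z hz hzx
          rw [hxfsteq] at hzx
          have hzR : z.2.2 ∈ R := (DInv.mem_facts hinv₂ z hz).2.2.1
          have : z.2.2 = x.2.2 := hRfst (Finset.mem_coe.2 hzR) (Finset.mem_coe.2 hxR) hzx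
          exact hxrs z hz this
        obtain ⟨P', Q', β, hQ'R, hQ'S, hP'mem, hP'col, hP'colc, hP'fst, hP'fstc,
          hP'snd, hβ, hP'sndc, hP'card⟩ :=
          ih L₂ hlen₂ hinv₂ x.1 x.2.1 hxU hxcols hxe' hxchain hfste₂
        refine ⟨insert (u, e) P', insert x.2.2 Q', β, ?_, ?_, ?_, ?_, ?_, ?_, ?_, ?_, hβ, ?_, ?_⟩
        -- facts
        · -- Q ⊆ R
          intro q hq
          rcases Finset.mem_insert.1 hq with rfl | hq
          · exact hxR
          · exact hQ'R hq
        · -- Q ⊆ rset S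
          intro q hq
          rcases Finset.mem_insert.1 hq with rfl | hq
          · exact ⟨x, hxS, rfl⟩
          · obtain ⟨z, hz, hzq⟩ := hQ'S q hq
            exact ⟨z, hmemL₂ z hz, hzq⟩
        · -- P membership
          intro p hp
          rcases Finset.mem_insert.1 hp with rfl | hp
          · exact ⟨hu, he⟩
          · exact hP'mem p hp
        · -- P colors
          intro p hp
          rcases Finset.mem_insert.1 hp with rfl | hp
          · exact Or.inl rfl
          · rcases hP'col p hp with h | ⟨z, hz, hzp⟩
            · exact Or.inr ⟨x, hxS, h.symm⟩
            · exact Or.inr ⟨z, hmemL₂ z hz, hzp⟩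
        · -- colors card
          have hunotin : u ∉ P'.image (fun p => p.1) := by
            simp only [Finset.mem_image]
            rintro ⟨p, hp, hpu⟩
            rcases hP'col p hp with h | ⟨z, hz, hzp⟩
            · exact hcolu x hxS (by rw [← hpu, h])
            · exact hcolu z (hmemL₂ z hz) (by rw [← hpu, hzp])
          have hne : (u, e) ∉ P' := by
            intro hmem
            exact hunotin (Finset.mem_image.2 ⟨(u, e), hmem, rfl⟩)
          rw [Finset.image_insert, Finset.card_insert_of_notMem hunotin,
            Finset.card_insert_of_notMem hne, hP'colc]
        · -- fst identity
          rw [Finset.image_insert, hP'fst, Finset.image_insert, hxfsteq]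
        · -- fst card
          have hne1 : e.1 ∉ P'.image (fun p => p.2.1) := by
            rw [hP'fst]
            simp only [Finset.mem_insert, Finset.mem_image]
            rintro (h | ⟨q, hq, hqe⟩)
            · exact hfste x hxS (by rw [hxfsteq] at h; exact h.symm)
            · obtain ⟨z, hz, rfl⟩ := hQ'S q hq
              exact hfste z (hmemL₂ z hz) hqe
          have hne : (u, e) ∉ P' := by
            intro hmem
            exact hne1 (Finset.mem_image.2 ⟨(u, e), hmem, rfl⟩)
          rw [Finset.image_insert, Finset.card_insert_of_notMem hne1,
            Finset.card_insert_of_notMem hne, hP'fstc]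
        · -- snd identity
          rw [Finset.image_insert, hP'snd, Finset.image_insert, ← hxe, Finset.insert_comm]
        · -- snd card
          have hne2 : e.2 ∉ P'.image (fun p => p.2.2) := by
            rw [hP'snd]
            simp only [Finset.mem_insert, Finset.mem_image]
            rintro (h | ⟨q, hq, hqe⟩)
            · exact hβ x.2.2 hxR (hxe.trans h)
            · obtain ⟨z, hz, rfl⟩ := hQ'S q hq
              have hzR : z.2.2 ∈ R := (DInv.mem_facts hinv₂ z hz).2.2.1
              have : z.2.2 = x.2.2 := hRsnd (Finset.mem_coe.2 hzR) (Finset.mem_coe.2 hxR)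
                (by show z.2.2.2.2 = x.2.2.2.2; rw [hqe, ← hxe])
              exact hxrs z hz this
          have hne : (u, e) ∉ P' := by
            intro hmem
            exact hne2 (Finset.mem_image.2 ⟨(u, e), hmem, rfl⟩)
          rw [Finset.image_insert, Finset.card_insert_of_notMem hne2,
            Finset.card_insert_of_notMem hne, hP'sndc]
        · -- card
          have hne : (u, e) ∉ P' := by
            intro hmem
            rcases hP'col _ hmem with h | ⟨z, hz, hzp⟩
            · exact hcolu x hxS h.symm
            · exact hcolu z (hmemL₂ z hz) hzp
          have hxQ' : x.2.2 ∉ Q' := by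
            intro hmem
            obtain ⟨z, hz, hzq⟩ := hQ'S _ hmem
            exact hxrs z hz hzq
          rw [Finset.card_insert_of_notMem hne, Finset.card_insert_of_notMem hxQ', hP'card]

lemma injOn_union_finset {α β : Type*} [DecidableEq α] {s t : Finset α} {f : α → β}
    (hs : Set.InjOn f ↑s) (ht : Set.InjOn f ↑t) (hst : ∀ x ∈ s, ∀ y ∈ t, f x ≠ f y) :
    Set.InjOn f ↑(s ∪ t) := by
  intro x hx y hy hxy
  simp only [Finset.coe_union, Set.mem_union, Finset.mem_coe] at hx hy
  rcases hx with hx | hx <;> rcases hy with hy | hy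
  · exact hs (Finset.mem_coe.2 hx) (Finset.mem_coe.2 hy) hxy
  · exact absurd hxy (hst x hx y hy)
  · exact absurd hxy.symm (hst y hy x hx)
  · exact ht (Finset.mem_coe.2 hx) (Finset.mem_coe.2 hy) hxy

lemma drisko_assemble
    (N : ι → Finset (V × V)) (idxs U : Finset ι) (R : Finset (ι × V × V)) (k : ℕ)
    (hU : U ⊆ idxs)
    (hRidx : ∀ p ∈ R, p.1 ∈ idxs) (hRmem : ∀ p ∈ R, p.2 ∈ N p.1)
    (hRcol : Set.InjOn (fun p : ι × V × V => p.1) ↑R)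
    (hRfst : Set.InjOn (fun p : ι × V × V => p.2.1) ↑R)
    (hRsnd : Set.InjOn (fun p : ι × V × V => p.2.2) ↑R)
    (hRcard : R.card = k)
    (hdisj : ∀ p ∈ R, p.1 ∉ U)
    (P Q : Finset (ι × V × V)) (a1 β : V)
    (hQR : Q ⊆ R)
    (hPmem : ∀ p ∈ P, p.1 ∈ U ∧ p.2 ∈ N p.1)
    (hPcolc : (P.image fun p => p.1).card = P.card)
    (hPfst : (P.image fun p => p.2.1) = insert a1 (Q.image fun p => p.2.1))
    (hPfstc : (P.image fun p => p.2.1).card = P.card)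
    (hPsnd : (P.image fun p => p.2.2) = insert β (Q.image fun p => p.2.2))
    (hβ : ∀ p ∈ R, p.2.2 ≠ β)
    (hPsndc : (P.image fun p => p.2.2).card = P.card)
    (hPQ : P.card = Q.card + 1)
    (ha1 : ∀ p ∈ R, p.2.1 ≠ a1) :
    ∃ R' : Finset (ι × V × V),
      (∀ p ∈ R', p.1 ∈ idxs ∧ p.2 ∈ N p.1) ∧
      Set.InjOn (fun p : ι × V × V => p.1) ↑R' ∧
      Set.InjOn (fun p : ι × V × V => p.2.1) ↑R' ∧
      Set.InjOn (fun p : ι × V × V => p.2.2) ↑R' ∧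
      R'.card = k + 1 := by
  have hsdiff : ∀ x ∈ R \ Q, x ∈ R := fun x hx => (Finset.mem_sdiff.1 hx).1
  have hcoesd : (↑(R \ Q) : Set (ι × V × V)) ⊆ ↑R := by
    intro x hx; exact Finset.mem_coe.2 (hsdiff x (Finset.mem_coe.1 hx))
  refine ⟨(R \ Q) ∪ P, ?_, ?_, ?_, ?_, ?_⟩
  · intro p hp
    rcases Finset.mem_union.1 hp with hp | hp
    · exact ⟨hRidx p (hsdiff p hp), hRmem p (hsdiff p hp)⟩
    · exact ⟨hU (hPmem p hp).1, (hPmem p hp).2⟩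
  · -- colors injective
    refine injOn_union_finset (hRcol.mono hcoesd) (Finset.card_image_iff.1 hPcolc) ?_
    intro x hx y hy hxy
    exact hdisj x (hsdiff x hx) (by rw [show x.1 = y.1 from hxy]; exact (hPmem y hy).1)
  · -- fst injective
    refine injOn_union_finset (hRfst.mono hcoesd) (Finset.card_image_iff.1 hPfstc) ?_
    intro x hx y hy hxy
    have hy1 : y.2.1 ∈ insert a1 (Q.image fun p => p.2.1) := by
      rw [← hPfst]; exact Finset.mem_image.2 ⟨y, hy, rfl⟩
    rcases Finset.mem_insert.1 hy1 with h | h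
    · exact ha1 x (hsdiff x hx) (by rw [show x.2.1 = y.2.1 from hxy]; exact h)
    · obtain ⟨q, hq, hqy⟩ := Finset.mem_image.1 h
      have : x = q := hRfst (Finset.mem_coe.2 (hsdiff x hx)) (Finset.mem_coe.2 (hQR hq))
        (by show x.2.1 = q.2.1; rw [hqy]; exact hxy)
      exact (Finset.mem_sdiff.1 hx).2 (this ▸ hq)
  · -- snd injective
    refine injOn_union_finset (hRsnd.mono hcoesd) (Finset.card_image_iff.1 hPsndc) ?_
    intro x hx y hy hxy
    have hy1 : y.2.2 ∈ insert β (Q.image fun p => p.2.2) := by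
      rw [← hPsnd]; exact Finset.mem_image.2 ⟨y, hy, rfl⟩
    rcases Finset.mem_insert.1 hy1 with h | h
    · exact hβ x (hsdiff x hx) (by rw [show x.2.2 = y.2.2 from hxy]; exact h)
    · obtain ⟨q, hq, hqy⟩ := Finset.mem_image.1 h
      have : x = q := hRsnd (Finset.mem_coe.2 (hsdiff x hx)) (Finset.mem_coe.2 (hQR hq))
        (by show x.2.2 = q.2.2; rw [hqy]; exact hxy)
      exact (Finset.mem_sdiff.1 hx).2 (this ▸ hq)
  · -- cardinality
    have hdisj2 : Disjoint (R \ Q) P := by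
      rw [Finset.disjoint_left]
      intro x hx hxP
      exact hdisj x (hsdiff x hx) (hPmem x hxP).1
    rw [Finset.card_union_of_disjoint hdisj2, Finset.card_sdiff_of_subset hQR, hRcard, hPQ]
    have := Finset.card_le_card hQR
    omega


lemma drisko_grow
    (N : ι → Finset (V × V)) (idxs U : Finset ι) (R : Finset (ι × V × V)) (k : ℕ)
    (hU : U ⊆ idxs)
    (hRidx : ∀ p ∈ R, p.1 ∈ idxs) (hRmem : ∀ p ∈ R, p.2 ∈ N p.1)
    (hRcol : Set.InjOn (fun p : ι × V × V => p.1) ↑R)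
    (hRfst : Set.InjOn (fun p : ι × V × V => p.2.1) ↑R)
    (hRsnd : Set.InjOn (fun p : ι × V × V => p.2.2) ↑R)
    (hRcard : R.card = k)
    (hdisj : ∀ p ∈ R, p.1 ∉ U)
    (hUpm : ∀ u ∈ U, Set.InjOn (fun x : V × V => x.1) ↑(N u) ∧
        Set.InjOn (fun x : V × V => x.2) ↑(N u) ∧ k + 1 ≤ (N u).card) :
    ∀ (m : ℕ) (U' : Finset ι) (S : List (ι × (V × V) × (ι × V × V))),
      U' ⊆ U → U'.card = m → DInv N U R S → (∀ y ∈ S, y.1 ∉ U') →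
      k + 1 ≤ m + S.length →
      ∃ R' : Finset (ι × V × V),
        (∀ p ∈ R', p.1 ∈ idxs ∧ p.2 ∈ N p.1) ∧
        Set.InjOn (fun p : ι × V × V => p.1) ↑R' ∧
        Set.InjOn (fun p : ι × V × V => p.2.1) ↑R' ∧
        Set.InjOn (fun p : ι × V × V => p.2.2) ↑R' ∧
        R'.card = k + 1 := by
  intro m
  induction m with
  | zero =>
      intro U' S hU'U hU'card hinv hSU' harith
      have := hinv.length_le
      omega
  | succ m ih =>
      intro U' S hU'U hU'card hinv hSU' harith
      have hSk : S.length ≤ k := hRcard ▸ hinv.length_le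
      have hU'ne : U'.Nonempty := Finset.card_pos.1 (by omega)
      obtain ⟨u, hu⟩ := hU'ne
      have huU : u ∈ U := hU'U hu
      obtain ⟨hNfst, hNsnd, hNcard⟩ := hUpm u huU
      -- counting: find a good edge e ∈ N u
      set sndR : Finset V := R.image (fun p => p.2.2) with hsndR
      set BFS : Finset V := (S.map (fun y => y.2.2.2.2)).toFinset with hBFS
      set FFS : Finset V := (S.map (fun y => y.2.2.2.1)).toFinset with hFFS
      have hBsub : BFS ⊆ sndR := by
        intro b hb
        simp only [hBFS, List.mem_toFinset, List.mem_map] at hb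
        obtain ⟨y, hy, rfl⟩ := hb
        exact Finset.mem_image.2 ⟨y.2.2, (hinv.mem_facts y hy).2.2.1, rfl⟩
      have hblist_nodup : (S.map (fun y => y.2.2.2.2)).Nodup := by
        have h1 : (S.map (fun y => y.2.2)).Nodup := hinv.rlist_nodup
        have : S.map (fun y => y.2.2.2.2) = (S.map (fun y => y.2.2)).map (fun r => r.2.2) := by
          rw [List.map_map]; rfl
        rw [this]
        refine h1.map_on ?_
        intro x hx y hy hxy
        simp only [List.mem_map] at hx hy
        obtain ⟨x', hx', rfl⟩ := hx
        obtain ⟨y', hy', rfl⟩ := hy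
        exact hRsnd (Finset.mem_coe.2 (hinv.mem_facts x' hx').2.2.1)
          (Finset.mem_coe.2 (hinv.mem_facts y' hy').2.2.1) hxy
      have hBcard : BFS.card = S.length := by
        rw [hBFS, List.toFinset_card_of_nodup hblist_nodup, List.length_map]
      have hsndRcard : sndR.card = k := by
        rw [hsndR, Finset.card_image_of_injOn hRsnd, hRcard]
      have hFFScard : FFS.card ≤ S.length := by
        calc FFS.card ≤ (S.map (fun y => y.2.2.2.1)).length := List.toFinset_card_le _
        _ = S.length := List.length_map _
      set Bad1 : Finset (V × V) := (N u).filter (fun x => x.2 ∈ sndR \ BFS) with hBad1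
      set Bad2 : Finset (V × V) := (N u).filter (fun x => x.1 ∈ FFS) with hBad2
      have hB1 : Bad1.card ≤ k - S.length := by
        have h1 : Bad1.card ≤ (sndR \ BFS).card := by
          refine Finset.card_le_card_of_injOn (fun x => x.2) ?_ ?_
          · intro x hx; exact (Finset.mem_filter.1 hx).2
          · exact hNsnd.mono (Finset.coe_subset.2 (Finset.filter_subset _ _))
        rwa [Finset.card_sdiff_of_subset hBsub, hsndRcard, hBcard] at h1
      have hB2 : Bad2.card ≤ S.length := by
        have h1 : Bad2.card ≤ FFS.card := by
          refine Finset.card_le_card_of_injOn (fun x => x.1) ?_ ?_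
          · intro x hx; exact (Finset.mem_filter.1 hx).2
          · exact hNfst.mono (Finset.coe_subset.2 (Finset.filter_subset _ _))
        omega
      have hgood : (N u \ (Bad1 ∪ Bad2)).Nonempty := by
        rw [← Finset.card_pos]
        have h1 := Finset.le_card_sdiff (Bad1 ∪ Bad2) (N u)
        have h2 := Finset.card_union_le Bad1 Bad2
        omega
      obtain ⟨e, he⟩ := hgood
      have heN : e ∈ N u := (Finset.mem_sdiff.1 he).1
      have henot : e ∉ Bad1 ∪ Bad2 := (Finset.mem_sdiff.1 he).2
      have heB1 : ¬(e.2 ∈ sndR \ BFS) := by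
        intro h
        exact henot (Finset.mem_union.2 (Or.inl (Finset.mem_filter.2 ⟨heN, h⟩)))
      have heB2 : e.1 ∉ FFS := by
        intro h
        exact henot (Finset.mem_union.2 (Or.inr (Finset.mem_filter.2 ⟨heN, h⟩)))
      have hchain : (∀ p ∈ R, p.2.2 ≠ e.2) ∨ ∃ y ∈ S, y.2.2.2.2 = e.2 := by
        by_cases hmem : e.2 ∈ BFS
        · right
          simpa only [hBFS, List.mem_toFinset, List.mem_map] using hmem
        · left
          intro p hp hpe
          exact heB1 (Finset.mem_sdiff.2 ⟨Finset.mem_image.2 ⟨p, hp, hpe⟩, hmem⟩)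
      have hfste : ∀ y ∈ S, y.2.2.2.1 ≠ e.1 := by
        intro y hy hye
        exact heB2 (by rw [← hye]; exact List.mem_toFinset.2 (List.mem_map.2 ⟨y, hy, rfl⟩))
      have hcolu : ∀ y ∈ S, y.1 ≠ u := by
        intro y hy hyu
        exact hSU' y hy (hyu ▸ hu)
      by_cases hblock : ∃ r ∈ R, r.2.1 = e.1
      · -- extend the forest and recurse
        obtain ⟨r, hrR, hre⟩ := hblock
        have hrnew : ∀ y ∈ S, y.2.2 ≠ r := by
          intro y hy hyr
          exact hfste y hy (by rw [hyr, hre])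
        have hinv' : DInv N U R ((u, e, r) :: S) :=
          ⟨hinv, huU, hcolu, heN, hrR, hrnew, hre.symm, hchain⟩
        refine ih (U'.erase u) ((u, e, r) :: S) ?_ ?_ hinv' ?_ ?_
        · exact Finset.Subset.trans (Finset.erase_subset u U') hU'U
        · rw [Finset.card_erase_of_mem hu, hU'card]; omega
        · intro y hy
          rcases List.mem_cons.1 hy with rfl | hy
          · exact Finset.notMem_erase u U'
          · exact fun hmem => hSU' y hy (Finset.mem_of_mem_erase hmem)
        · simp only [List.length_cons]; omega
      · -- augment!
        push_neg at hblock
        obtain ⟨P, Q, β, hQR, hQS, hPmem, hPcol, hPcolc, hPfst, hPfstc, hPsnd, hβ, hPsndc,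
          hPcard⟩ := drisko_extend N U R hRfst hRsnd S.length S le_rfl hinv u e huU hcolu heN
            hchain hfste
        exact drisko_assemble N idxs U R k hU hRidx hRmem hRcol hRfst hRsnd hRcard hdisj
          P Q e.1 β hQR hPmem hPcolc hPfst hPfstc hPsnd hβ hPsndc hPcard hblock


lemma drisko_core :
    ∀ (k : ℕ) (N : ι → Finset (V × V)) (idxs : Finset ι),
      2 * k ≤ idxs.card + 1 →
      (∀ i ∈ idxs, Set.InjOn (fun x : V × V => x.1) ↑(N i) ∧
        Set.InjOn (fun x : V × V => x.2) ↑(N i)) →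
      (∀ i ∈ idxs, k ≤ (N i).card) →
      ∃ R : Finset (ι × V × V),
        (∀ p ∈ R, p.1 ∈ idxs ∧ p.2 ∈ N p.1) ∧
        Set.InjOn (fun p : ι × V × V => p.1) ↑R ∧
        Set.InjOn (fun p : ι × V × V => p.2.1) ↑R ∧
        Set.InjOn (fun p : ι × V × V => p.2.2) ↑R ∧
        R.card = k := by
  intro k
  induction k with
  | zero =>
      intro N idxs _ _ _
      exact ⟨∅, by simp, by simp, by simp, by simp, by simp⟩
  | succ k ih =>
      intro N idxs hsz hpm hc
      obtain ⟨R, hRmem, hRcol, hRfst, hRsnd, hRcard⟩ :=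
        ih N idxs (by omega) hpm (fun i hi => Nat.le_of_succ_le (hc i hi))
      set CR : Finset ι := R.image (fun p => p.1) with hCR
      have hCRsub : CR ⊆ idxs := by
        intro i hi
        obtain ⟨p, hp, rfl⟩ := Finset.mem_image.1 hi
        exact (hRmem p hp).1
      have hCRcard : CR.card = k := by
        rw [hCR, Finset.card_image_of_injOn hRcol, hRcard]
      set U : Finset ι := idxs \ CR with hUdef
      have hUcard : U.card = idxs.card - k := by
        rw [hUdef, Finset.card_sdiff_of_subset hCRsub, hCRcard]
      have hUU : U ⊆ idxs := Finset.sdiff_subset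
      have hdisj : ∀ p ∈ R, p.1 ∉ U := by
        intro p hp hmem
        exact (Finset.mem_sdiff.1 hmem).2 (Finset.mem_image.2 ⟨p, hp, rfl⟩)
      refine drisko_grow N idxs U R k hUU (fun p hp => (hRmem p hp).1)
        (fun p hp => (hRmem p hp).2) hRcol hRfst hRsnd hRcard hdisj ?_
        U.card U [] le_rfl rfl trivial (by simp) ?_
      · intro u hu
        exact ⟨(hpm u (hUU hu)).1, (hpm u (hUU hu)).2, hc u (hUU hu)⟩
      · simp only [List.length_nil]
        omega

end Core

/-- `M` is a matching in `G`: a set of edges of `G` that are pairwise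
vertex-disjoint. -/
def IsMatchingIn {V : Type*} (G : SimpleGraph V) (M : Finset (Sym2 V)) : Prop :=
  ↑M ⊆ G.edgeSet ∧ ∀ e ∈ M, ∀ f ∈ M, e ≠ f → ∀ v, v ∈ e → v ∉ f

/-- Drisko's theorem: `2n-1` matchings of size `n` in a bipartite graph have a
full rainbow matching of size `n`. -/
theorem drisko {V : Type*} [DecidableEq V] {G : SimpleGraph V}
    (hbip : G.Colorable 2) {n : ℕ}
    (M : Fin (2 * n - 1) → Finset (Sym2 V))
    (hM : ∀ i, IsMatchingIn G (M i)) (hcard : ∀ i, (M i).card = n) :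
    ∃ (e : Fin n → Sym2 V) (idx : Fin n → Fin (2 * n - 1)),
      Function.Injective e ∧ Function.Injective idx ∧
      (∀ j, e j ∈ M (idx j)) ∧
      IsMatchingIn G (Finset.univ.image e) := by
  classical
  obtain ⟨C⟩ := hbip
  -- every edge of `G` can be written with the color-0 endpoint first
  have hex : ∀ e ∈ G.edgeSet, ∃ p : V × V, e = s(p.1, p.2) ∧ C p.1 = 0 ∧ C p.2 = 1 := by
    intro e
    refine Sym2.ind (fun x y he => ?_) e
    rw [SimpleGraph.mem_edgeSet] at he
    have hne : C x ≠ C y := C.valid he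
    have h2 : ∀ a b : Fin 2, a ≠ b → a = 0 ∧ b = 1 ∨ a = 1 ∧ b = 0 := by decide
    rcases h2 _ _ hne with ⟨h1, h2'⟩ | ⟨h1, h2'⟩
    · exact ⟨(x, y), rfl, h1, h2'⟩
    · exact ⟨(y, x), Sym2.eq_swap.symm, h2', h1⟩
  set f : Sym2 V → V × V := fun e =>
    if h : ∃ p : V × V, e = s(p.1, p.2) ∧ C p.1 = 0 ∧ C p.2 = 1 then h.choose
    else Quot.out e with hfdef
  have hf : ∀ e ∈ G.edgeSet, e = s((f e).1, (f e).2) ∧ C (f e).1 = 0 ∧ C (f e).2 = 1 := by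
    intro e he
    have h := hex e he
    simp only [hfdef, dif_pos h]
    exact h.choose_spec
  have hMG : ∀ i, ∀ e ∈ M i, e ∈ G.edgeSet := fun i e he => (hM i).1 he
  have hmemf1 : ∀ i, ∀ e ∈ M i, (f e).1 ∈ e := by
    intro i e he
    have h := (hf e (hMG i e he)).1
    have h2 : (f e).1 ∈ s((f e).1, (f e).2) := by rw [Sym2.mem_iff]; left; rfl
    rwa [← h] at h2
  have hmemf2 : ∀ i, ∀ e ∈ M i, (f e).2 ∈ e := by
    intro i e he
    have h := (hf e (hMG i e he)).1
    have h2 : (f e).2 ∈ s((f e).1, (f e).2) := by rw [Sym2.mem_iff]; right; rfl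
    rwa [← h] at h2
  set N : Fin (2 * n - 1) → Finset (V × V) := fun i => (M i).image f with hNdef
  have hfinj : ∀ i, Set.InjOn f ↑(M i) := by
    intro i e he e' he' hee
    rw [(hf e (hMG i e (Finset.mem_coe.1 he))).1, (hf e' (hMG i e' (Finset.mem_coe.1 he'))).1,
      hee]
  have hNcard : ∀ i, (N i).card = n := by
    intro i
    rw [hNdef]
    rw [Finset.card_image_of_injOn (hfinj i), hcard i]
  have hNpm : ∀ i, Set.InjOn (fun x : V × V => x.1) ↑(N i) ∧
      Set.InjOn (fun x : V × V => x.2) ↑(N i) := by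
    intro i
    constructor
    · intro x hx y hy hxy
      obtain ⟨e, he, rfl⟩ := Finset.mem_image.1 (Finset.mem_coe.1 hx)
      obtain ⟨e', he', rfl⟩ := Finset.mem_image.1 (Finset.mem_coe.1 hy)
      by_cases hee : e = e'
      · rw [hee]
      · have hxy' : (f e).1 = (f e').1 := hxy
        exact absurd (hxy' ▸ hmemf1 i e' he')
          ((hM i).2 e he e' he' hee (f e).1 (hmemf1 i e he))
    · intro x hx y hy hxy
      obtain ⟨e, he, rfl⟩ := Finset.mem_image.1 (Finset.mem_coe.1 hx)
      obtain ⟨e', he', rfl⟩ := Finset.mem_image.1 (Finset.mem_coe.1 hy)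
      by_cases hee : e = e'
      · rw [hee]
      · have hxy' : (f e).2 = (f e').2 := hxy
        exact absurd (hxy' ▸ hmemf2 i e' he')
          ((hM i).2 e he e' he' hee (f e).2 (hmemf2 i e he))
  obtain ⟨R, hRmem, hRcol, hRfst, hRsnd, hRcard⟩ :=
    drisko_core n N Finset.univ
      (by rw [Finset.card_univ, Fintype.card_fin]; omega)
      (fun i _ => hNpm i) (fun i _ => le_of_eq (hNcard i).symm)
  -- the Sym2 edge associated to each rainbow element
  have hkey : ∀ p ∈ R, s(p.2.1, p.2.2) ∈ M p.1 ∧ C p.2.1 = 0 ∧ C p.2.2 = 1 := by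
    intro p hp
    have h2 := (hRmem p hp).2
    rw [hNdef] at h2
    obtain ⟨ep, hep, hfep⟩ := Finset.mem_image.1 h2
    have hG := hMG p.1 ep hep
    have h := hf ep hG
    have h1 : p.2.1 = (f ep).1 := by rw [← hfep]
    have h2' : p.2.2 = (f ep).2 := by rw [← hfep]
    refine ⟨?_, ?_, ?_⟩
    · rw [h1, h2', ← h.1]; exact hep
    · rw [h1]; exact h.2.1
    · rw [h2']; exact h.2.2
  -- build the functions
  let q : Fin n → {x // x ∈ R} := fun j => R.equivFin.symm (Fin.cast hRcard.symm j)
  have hqinj : Function.Injective q := by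
    intro j j' h
    have := congrArg R.equivFin h
    simp only [q, Equiv.apply_symm_apply] at this
    exact Fin.cast_injective _ this
  have hqmem : ∀ j, (q j).1 ∈ R := fun j => (q j).2
  refine ⟨fun j => s((q j).1.2.1, (q j).1.2.2), fun j => (q j).1.1, ?_, ?_, ?_, ?_, ?_⟩
  · -- e injective
    intro j j' h
    rw [Sym2.eq_iff] at h
    have hcq := hkey _ (hqmem j)
    have hcq' := hkey _ (hqmem j')
    have heq : (q j).1.2.1 = (q j').1.2.1 := by
      rcases h with ⟨h1, _⟩ | ⟨h1, h2⟩
      · exact h1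
      · exfalso
        have := hcq.2.1
        rw [h1, hcq'.2.2] at this
        exact absurd this (by decide)
    have : (q j).1 = (q j').1 :=
      hRfst (Finset.mem_coe.2 (hqmem j)) (Finset.mem_coe.2 (hqmem j')) heq
    exact hqinj (Subtype.ext this)
  · -- idx injective
    intro j j' h
    have : (q j).1 = (q j').1 :=
      hRcol (Finset.mem_coe.2 (hqmem j)) (Finset.mem_coe.2 (hqmem j')) h
    exact hqinj (Subtype.ext this)
  · -- membership
    intro j
    exact (hkey _ (hqmem j)).1
  · -- is matching: edges of G
    intro x hx
    simp only [Finset.coe_image, Set.mem_image, Finset.mem_coe, Finset.mem_univ] at hx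
    obtain ⟨j, _, rfl⟩ := hx
    exact hMG _ _ (hkey _ (hqmem j)).1
  · -- is matching: disjointness
    intro a ha b hb hab v hva hvb
    simp only [Finset.mem_image, Finset.mem_univ, true_and] at ha hb
    obtain ⟨j, rfl⟩ := ha
    obtain ⟨j', rfl⟩ := hb
    have hcq := hkey _ (hqmem j)
    have hcq' := hkey _ (hqmem j')
    have hqq : (q j).1 ≠ (q j').1 := by
      intro h
      exact hab (by rw [h])
    rw [Sym2.mem_iff] at hva hvb
    rcases hva with rfl | rfl <;> rcases hvb with h | h
    · exact hqq (hRfst (Finset.mem_coe.2 (hqmem j)) (Finset.mem_coe.2 (hqmem j')) h)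
    · have := hcq.2.1
      rw [h, hcq'.2.2] at this
      exact absurd this (by decide)
    · have := hcq.2.2
      rw [h, hcq'.2.1] at this
      exact absurd this (by decide)
    · exact hqq (hRsnd (Finset.mem_coe.2 (hqmem j)) (Finset.mem_coe.2 (hqmem j')) h)
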